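/- (Factorization identity) Let S be a strongly continuous semigroup on a Banach space X, let h : [0,∞) → X be continuous, and let 0 < α < 1. Define Y(s) = ∫₀^s (s−r)^{−α} S(s−r) h(r) dr. Then for every t ≥ 0, ∫₀^t S(t−s) h(s) ds = (sin(πα)/π) ∫₀^t (t−s)^{α−1} S(t−s) Y(s) ds. -/

import Mathlib

open intervalIntegral MeasureTheory

section DPZAux

open Real Set

variable {X : Type*} [NormedAddCommGroup X] [NormedSpace ℝ X] [CompleteSpace X]



lemma beta_refl {α : ℝ} (hα0 : 0 < α) (hα1 : α < 1) :
    ∫ u in (0:ℝ)..1, u ^ (-α) * (1 - u) ^ (α - 1) = Real.pi / Real.sin (Real.pi * α) := by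
  have h1 : (0:ℝ) < 1 - α := by linarith
  have hc : Complex.Gamma (1 - α) * Complex.Gamma α
      = Complex.Gamma ((1-α) + α) * Complex.betaIntegral (1-α) α := by
    apply Complex.Gamma_mul_Gamma_eq_betaIntegral
    · simpa using h1
    · simpa using hα0
  have h2 : ((1:ℂ)-α) + α = 1 := by ring
  rw [h2, Complex.Gamma_one, one_mul] at hc
  have hbeta : Complex.betaIntegral (1-α) α
      = ((∫ u in (0:ℝ)..1, u ^ (-α) * (1 - u) ^ (α - 1) : ℝ) : ℂ) := by
    rw [Complex.betaIntegral, ← intervalIntegral.integral_ofReal]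
    apply intervalIntegral.integral_congr
    intro x hx
    rw [Set.uIcc_of_le (by norm_num : (0:ℝ) ≤ 1)] at hx
    obtain ⟨hx0, hx1⟩ := hx
    push_cast
    rw [Complex.ofReal_cpow hx0, Complex.ofReal_cpow (by linarith)]
    push_cast
    ring_nf
  rw [hbeta] at hc
  have hR : Complex.Gamma (1-α) * Complex.Gamma α
      = ((Real.Gamma (1-α) * Real.Gamma α : ℝ) : ℂ) := by
    push_cast
    rw [← Complex.Gamma_ofReal, ← Complex.Gamma_ofReal]
    push_cast
    ring
  rw [hR] at hc
  have := Complex.ofReal_inj.mp hc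
  rw [← this, mul_comm, Real.Gamma_mul_Gamma_one_sub]

lemma beta_sub {α : ℝ} (hα0 : 0 < α) (hα1 : α < 1) {r t : ℝ} (hrt : r < t) :
    ∫ s in r..t, (t - s) ^ (α - 1) * (s - r) ^ (-α) = Real.pi / Real.sin (Real.pi * α) := by
  set d : ℝ := t - r with hd
  have hd0 : 0 < d := by simp [hd]; linarith
  have key := intervalIntegral.smul_integral_comp_mul_add (a := 0) (b := 1)
    (fun s => (t - s) ^ (α - 1) * (s - r) ^ (-α)) d r
  have he : d * 0 + r = r := by ring
  have he' : d * 1 + r = t := by rw [hd]; ring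
  rw [he, he'] at key
  rw [← key, ← intervalIntegral.integral_smul]
  have : ∀ u ∈ Set.uIcc (0:ℝ) 1,
      d • ((t - (d * u + r)) ^ (α - 1) * (d * u + r - r) ^ (-α))
        = u ^ (-α) * (1 - u) ^ (α - 1) := by
    intro u hu
    rw [Set.uIcc_of_le (by norm_num : (0:ℝ) ≤ 1)] at hu
    obtain ⟨hu0, hu1⟩ := hu
    have e1 : t - (d * u + r) = d * (1 - u) := by rw [hd]; ring
    have e2 : d * u + r - r = d * u := by ring
    rw [e1, e2, Real.mul_rpow (le_of_lt hd0) (by linarith),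
        Real.mul_rpow (le_of_lt hd0) (by linarith), smul_eq_mul]
    have : d * (d ^ (α - 1) * (1 - u) ^ (α - 1) * (d ^ (-α) * u ^ (-α)))
        = (d * (d ^ (α - 1) * d ^ (-α))) * (u ^ (-α) * (1 - u) ^ (α - 1)) := by ring
    have h3 : d * (d ^ (α - 1) * d ^ (-α)) = 1 := by
      rw [← Real.rpow_add hd0, show α - 1 + -α = -1 by ring, Real.rpow_neg_one,
        mul_inv_cancel₀ (ne_of_gt hd0)]
    rw [this, h3, one_mul]
  rw [intervalIntegral.integral_congr this, beta_refl hα0 hα1]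



lemma sgbound (S : ℝ → X →L[ℝ] X)
    (hScont : ∀ x : X, ContinuousOn (fun t => S t x) (Set.Ici 0)) (T : ℝ) :
    ∃ C : ℝ, 0 ≤ C ∧ ∀ τ ∈ Set.Icc (0:ℝ) T, ‖S τ‖ ≤ C := by
  obtain ⟨C, hC⟩ := banach_steinhaus (g := fun τ : Set.Icc (0:ℝ) T => S τ.1)
    (fun x => by
      obtain ⟨C, hC⟩ := (isCompact_Icc : IsCompact (Set.Icc (0:ℝ) T)).exists_bound_of_continuousOn
        ((hScont x).mono (fun r hr => hr.1))
      exact ⟨C, fun τ => hC τ.1 τ.2⟩)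
  exact ⟨max C 0, le_max_right _ _, fun τ hτ => le_trans (hC ⟨τ, hτ⟩) (le_max_left _ _)⟩

lemma Gcont (S : ℝ → X →L[ℝ] X)
    (hScont : ∀ x : X, ContinuousOn (fun t => S t x) (Set.Ici 0))
    (h : ℝ → X) (hh : Continuous h) (a : ℝ) :
    ContinuousOn (fun r => S (a - r) (h r)) (Set.Icc 0 a) := by
  obtain ⟨C, hC0, hC⟩ := sgbound S hScont a
  intro r₀ hr₀
  have h2 : ContinuousWithinAt (fun r => S (a - r) (h r₀)) (Set.Icc 0 a) r₀ :=
    ((hScont (h r₀)).comp ((continuous_const.sub continuous_id).continuousOn)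
      (fun r hr => sub_nonneg.mpr hr.2)) r₀ hr₀
  have h2t : Filter.Tendsto (fun r => S (a - r) (h r₀))
      (nhdsWithin r₀ (Set.Icc 0 a)) (nhds (S (a - r₀) (h r₀))) := h2
  have h2' : Filter.Tendsto (fun r => ‖S (a - r) (h r₀) - S (a - r₀) (h r₀)‖)
      (nhdsWithin r₀ (Set.Icc 0 a)) (nhds 0) := by
    rw [← tendsto_sub_nhds_zero_iff] at h2t
    simpa using h2t.norm
  have h3 : Filter.Tendsto (fun r => C * ‖h r - h r₀‖)
      (nhdsWithin r₀ (Set.Icc 0 a)) (nhds 0) := by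
    have : Filter.Tendsto (fun r => h r - h r₀) (nhdsWithin r₀ (Set.Icc 0 a)) (nhds 0) := by
      rw [tendsto_sub_nhds_zero_iff]
      exact (hh.tendsto r₀).mono_left nhdsWithin_le_nhds
    simpa using (this.norm.const_mul C)
  have goal : Filter.Tendsto (fun r => S (a - r) (h r) - S (a - r₀) (h r₀))
      (nhdsWithin r₀ (Set.Icc 0 a)) (nhds 0) := by
    apply squeeze_zero_norm' (a := fun r => C * ‖h r - h r₀‖
      + ‖S (a - r) (h r₀) - S (a - r₀) (h r₀)‖)
    · filter_upwards [eventually_mem_nhdsWithin] with r hr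
      have key : S (a - r) (h r) - S (a - r₀) (h r₀)
          = S (a - r) (h r - h r₀) + (S (a - r) (h r₀) - S (a - r₀) (h r₀)) := by
        rw [map_sub]; abel
      rw [key]
      refine (norm_add_le _ _).trans (add_le_add ?_ le_rfl)
      refine ((S (a - r)).le_opNorm _).trans ?_
      exact mul_le_mul_of_nonneg_right (hC _ ⟨sub_nonneg.mpr hr.2, by linarith [hr.1]⟩)
        (norm_nonneg _)
    · simpa using h3.add h2'
  have := tendsto_sub_nhds_zero_iff.mp goal
  exact this

lemma rpow_integrableOn {s α : ℝ} (hs : 0 ≤ s) (hα1 : α < 1) :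
    IntegrableOn (fun r => (s - r) ^ (-α)) (Set.Ioo (0:ℝ) s) volume := by
  have h1 : IntervalIntegrable (fun x : ℝ => x ^ (-α)) volume 0 s :=
    intervalIntegrable_rpow' (by linarith)
  have h2 := (h1.comp_sub_left s)
  simp only [sub_zero, sub_self] at h2
  have h3 : IntervalIntegrable (fun r : ℝ => (s - r) ^ (-α)) volume 0 s := h2.symm
  rw [intervalIntegrable_iff_integrableOn_Ioc_of_le hs] at h3
  exact h3.mono_set Set.Ioo_subset_Ioc_self

lemma integ_aux {g : ℝ → X} {s α : ℝ} (hs : 0 ≤ s) (hα1 : α < 1)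
    (hg : ContinuousOn g (Set.Icc 0 s)) :
    IntegrableOn (fun r => ((s - r) ^ (-α)) • g r) (Set.Ioo 0 s) volume := by
  obtain ⟨M, hM⟩ := (isCompact_Icc : IsCompact (Set.Icc (0:ℝ) s)).exists_bound_of_continuousOn hg
  have hsm : AEStronglyMeasurable (fun r => ((s - r) ^ (-α)) • g r)
      (volume.restrict (Set.Ioo 0 s)) := by
    apply ContinuousOn.aestronglyMeasurable _ measurableSet_Ioo
    apply ContinuousOn.smul _ (hg.mono Set.Ioo_subset_Icc_self)
    intro r hr
    apply ContinuousAt.continuousWithinAt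
    exact (Real.continuousAt_rpow_const _ _ (Or.inl (by simp; linarith [hr.2]))).comp
      (continuous_const.sub continuous_id).continuousAt
  apply Integrable.mono' ((rpow_integrableOn hs hα1).const_mul M) hsm
  filter_upwards [ae_restrict_mem measurableSet_Ioo] with r hr
  rw [norm_smul]
  have h1 : (0:ℝ) ≤ (s - r) ^ (-α) := Real.rpow_nonneg (by linarith [hr.2]) _
  rw [Real.norm_of_nonneg h1, mul_comm M]
  exact mul_le_mul_of_nonneg_left (hM r (Set.Ioo_subset_Icc_self hr)) h1

end DPZAux

open Real Set in
/-- the Da Prato–Zabczyk factorization identity: for a strongly continuous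
semigroup `S`, continuous `h`, and `0 < α < 1`,
`∫₀^t S(t−s)h(s) ds = (sin(πα)/π) ∫₀^t (t−s)^{α−1} S(t−s) Y(s) ds`, where
`Y(s) = ∫₀^s (s−r)^{−α} S(s−r) h(r) dr`. -/
theorem stmt10 {X : Type*} [NormedAddCommGroup X] [NormedSpace ℝ X] [CompleteSpace X]
    (S : ℝ → X →L[ℝ] X)
    (hS0 : S 0 = ContinuousLinearMap.id ℝ X)
    (hSsem : ∀ a b : ℝ, 0 ≤ a → 0 ≤ b → S (a + b) = (S a).comp (S b))
    (hScont : ∀ x : X, ContinuousOn (fun t => S t x) (Set.Ici 0))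
    (h : ℝ → X) (hh : Continuous h)
    (α : ℝ) (hα0 : 0 < α) (hα1 : α < 1)
    (Y : ℝ → X)
    (hY : ∀ s : ℝ, Y s = ∫ r in (0 : ℝ)..s, ((s - r) ^ (-α)) • S (s - r) (h r)) :
    ∀ t : ℝ, 0 ≤ t →
      (∫ s in (0 : ℝ)..t, S (t - s) (h s))
        = (Real.sin (Real.pi * α) / Real.pi) •
            ∫ s in (0 : ℝ)..t, ((t - s) ^ (α - 1)) • S (t - s) (Y s) := by
  intro t ht
  set G : ℝ → X := fun r => S (t - r) (h r) with hGdef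
  have hGc : ContinuousOn G (Set.Icc 0 t) := Gcont S hScont h hh t
  obtain ⟨M₀, hM₀⟩ := (isCompact_Icc : IsCompact (Set.Icc (0:ℝ) t)).exists_bound_of_continuousOn hGc
  set M : ℝ := max M₀ 0 with hMdef
  have hM0 : 0 ≤ M := le_max_right _ _
  have hM : ∀ r ∈ Set.Icc (0:ℝ) t, ‖G r‖ ≤ M := fun r hr => (hM₀ r hr).trans (le_max_left _ _)
  set ν : Measure ℝ := volume.restrict (Set.Ioo 0 t) with hνdef
  set κ : ℝ → ℝ → ℝ := fun s r => (t - s) ^ (α - 1) * (s - r) ^ (-α) with hκdef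
  set f : ℝ → ℝ → X := fun s r => Set.indicator (Set.Ioo 0 s) (fun r => κ s r • G r) r with hfdef
  have hrestr : ∀ s : ℝ, s ≤ t → ν.restrict (Set.Ioo 0 s) = volume.restrict (Set.Ioo 0 s) := by
    intro s hs
    rw [hνdef, Measure.restrict_restrict measurableSet_Ioo,
      Set.inter_eq_self_of_subset_left (Set.Ioo_subset_Ioo_right hs)]
  -- the inner integrand is integrable on `Ioo 0 s`
  have hIκ : ∀ s ∈ Set.Ioo 0 t, IntegrableOn (fun r => κ s r • G r) (Set.Ioo 0 s) volume := by
    intro s hs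
    have base : IntegrableOn (fun r => (t - s) ^ (α - 1) • (((s - r) ^ (-α)) • G r))
        (Set.Ioo 0 s) volume := (integ_aux (g := G) hs.1.le hα1
      (hGc.mono (Set.Icc_subset_Icc_right hs.2.le))).smul ((t - s) ^ (α - 1))
    refine base.congr_fun (fun r _ => ?_) measurableSet_Ioo
    simp only [hκdef, smul_smul]
  -- Step A+B : rewrite the integrand of the RHS
  have hAB : ∀ s ∈ Set.Ioo 0 t,
      ((t - s) ^ (α - 1)) • S (t - s) (Y s) = ∫ r, f s r ∂ν := by
    intro s hs
    have hYint : IntervalIntegrable (fun r => ((s - r) ^ (-α)) • S (s - r) (h r)) volume 0 s := by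
      rw [intervalIntegrable_iff_integrableOn_Ioc_of_le hs.1.le,
        integrableOn_Ioc_iff_integrableOn_Ioo]
      exact integ_aux hs.1.le hα1 (Gcont S hScont h hh s)
    have step1 : ((t - s) ^ (α - 1)) • S (t - s) (Y s)
        = ∫ r in (0:ℝ)..s, κ s r • G r := by
      rw [hY s, ← ContinuousLinearMap.intervalIntegral_comp_comm _ hYint,
        ← intervalIntegral.integral_smul]
      apply intervalIntegral.integral_congr
      intro r hr
      rw [Set.uIcc_of_le hs.1.le] at hr
      have e1 : t - s + (s - r) = t - r := by ring
      have e2 : S (t - s) (S (s - r) (h r)) = S (t - r) (h r) := by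
        rw [← ContinuousLinearMap.comp_apply, ← hSsem (t - s) (s - r)
          (by linarith [hs.2]) (by linarith [hr.2]), e1]
      show (t - s) ^ (α - 1) • S (t - s) (((s - r) ^ (-α)) • S (s - r) (h r)) = κ s r • G r
      rw [ContinuousLinearMap.map_smul, smul_smul, e2]
    rw [step1, intervalIntegral.integral_of_le hs.1.le, integral_Ioc_eq_integral_Ioo, hfdef]
    rw [MeasureTheory.integral_indicator measurableSet_Ioo, hrestr s hs.2.le]
  -- measurability of the double integrand
  have hUf : AEStronglyMeasurable (Function.uncurry f) (ν.prod ν) := by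
    set T' : Set (ℝ × ℝ) := {p : ℝ × ℝ | 0 < p.2 ∧ p.2 < p.1 ∧ p.1 < t} with hT'
    have hT'open : IsOpen T' := by
      have heq : T' = ({p : ℝ × ℝ | 0 < p.2} ∩ {p : ℝ × ℝ | p.2 < p.1}) ∩ {p : ℝ × ℝ | p.1 < t} := by
        ext p
        simp [hT', Set.mem_setOf_eq, and_assoc]
      rw [heq]
      exact ((isOpen_lt continuous_const continuous_snd).inter
        (isOpen_lt continuous_snd continuous_fst)).inter
        (isOpen_lt continuous_fst continuous_const)
    set g : ℝ × ℝ → X := fun p => κ p.1 p.2 • G p.2 with hg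
    have hgc : ContinuousOn g T' := by
      apply ContinuousOn.smul
      · apply ContinuousOn.mul
        · intro p hp
          apply ContinuousAt.continuousWithinAt
          exact (Real.continuousAt_rpow_const _ _ (Or.inl (by simp; linarith [hp.2.2]))).comp
            (continuous_const.sub continuous_fst).continuousAt
        · intro p hp
          apply ContinuousAt.continuousWithinAt
          exact (Real.continuousAt_rpow_const _ _ (Or.inl (by simp; linarith [hp.2.1]))).comp
            (continuous_fst.sub continuous_snd).continuousAt
      · exact hGc.comp continuous_snd.continuousOn
          (fun p hp => ⟨hp.1.le, hp.2.1.le.trans hp.2.2.le⟩)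
    have hind : AEStronglyMeasurable (Set.indicator T' g) (ν.prod ν) :=
      (aestronglyMeasurable_indicator_iff hT'open.measurableSet).mpr
        (hgc.aestronglyMeasurable hT'open.measurableSet)
    apply hind.congr
    have hmem : ∀ᵐ p ∂(ν.prod ν), p ∈ Set.Ioo (0:ℝ) t ×ˢ Set.Ioo (0:ℝ) t := by
      rw [hνdef, Measure.prod_restrict]
      exact ae_restrict_mem (measurableSet_Ioo.prod measurableSet_Ioo)
    filter_upwards [hmem] with p hp
    obtain ⟨hp1, hp2⟩ := hp
    by_cases hc : p.2 ∈ Set.Ioo 0 p.1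
    · have hcT : p ∈ T' := ⟨hc.1, hc.2, hp1.2⟩
      rw [Set.indicator_of_mem hcT]
      show g p = f p.1 p.2
      rw [hfdef]
      simp only [Set.indicator_of_mem hc]
      rfl
    · have hcT : p ∉ T' := fun hmem' => hc ⟨hmem'.1, hmem'.2.1⟩
      rw [Set.indicator_of_notMem hcT]
      show (0:X) = f p.1 p.2
      rw [hfdef]
      simp only [Set.indicator_of_notMem hc]
  -- value of the elementary rpow integral
  have hval : ∀ s : ℝ, 0 ≤ s → (∫ r in Set.Ioo (0:ℝ) s, (s - r) ^ (-α)) = s ^ (1 - α) / (1 - α) := by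
    intro s hs
    have hcs : (∫ r in (0:ℝ)..s, (s - r) ^ (-α)) = ∫ x in s - s..s - 0, x ^ (-α) :=
      intervalIntegral.integral_comp_sub_left (fun x => x ^ (-α)) s
    rw [← integral_Ioc_eq_integral_Ioo, ← intervalIntegral.integral_of_le hs, hcs, sub_self,
      sub_zero, integral_rpow (Or.inl (by linarith : (-1:ℝ) < -α)),
      Real.zero_rpow (by intro hcon; linarith : -α + 1 ≠ 0), sub_zero,
      show -α + 1 = 1 - α by ring]
  -- integrability for Fubini
  have hInt : Integrable (Function.uncurry f) (ν.prod ν) := by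
    rw [integrable_prod_iff hUf]
    constructor
    · filter_upwards [ae_restrict_mem measurableSet_Ioo] with s hs
      show Integrable (fun r => f s r) ν
      rw [hfdef]
      rw [integrable_indicator_iff measurableSet_Ioo]
      show IntegrableOn _ _ ν
      rw [IntegrableOn, hrestr s hs.2.le]
      exact hIκ s hs
    · apply Integrable.mono' (g := fun s => (M * (t ^ (1 - α) / (1 - α))) * (t - s) ^ (α - 1))
      · have base : IntegrableOn (fun s => (t - s) ^ (-(1 - α))) (Set.Ioo (0:ℝ) t) volume :=
          rpow_integrableOn ht (by linarith)
        have base' : IntegrableOn (fun s => (t - s) ^ (α - 1)) (Set.Ioo (0:ℝ) t) volume := by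
          refine base.congr_fun (fun s _ => ?_) measurableSet_Ioo
          rw [show -(1 - α) = α - 1 by ring]
        exact base'.const_mul _
      · exact hUf.norm.integral_prod_right'
      · filter_upwards [ae_restrict_mem measurableSet_Ioo] with s hs
        simp only [Function.uncurry_apply_pair]
        have hnn : 0 ≤ ∫ r, ‖f s r‖ ∂ν := integral_nonneg (fun r => norm_nonneg _)
        rw [Real.norm_of_nonneg hnn]
        have hb1 : ∀ r : ℝ, ‖f s r‖
            ≤ Set.indicator (Set.Ioo 0 s) (fun r => (M * (t - s) ^ (α - 1)) * (s - r) ^ (-α)) r := by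
          intro r
          simp only [hfdef]
          by_cases hr : r ∈ Set.Ioo 0 s
          · rw [Set.indicator_of_mem hr, Set.indicator_of_mem hr, norm_smul]
            have hκnn : 0 ≤ κ s r := mul_nonneg
              (Real.rpow_nonneg (by linarith [hs.2, hr.2]) _)
              (Real.rpow_nonneg (by linarith [hr.2]) _)
            rw [Real.norm_of_nonneg hκnn, hκdef]
            have := hM r ⟨hr.1.le, hr.2.le.trans hs.2.le⟩
            calc (t - s) ^ (α - 1) * (s - r) ^ (-α) * ‖G r‖
                ≤ (t - s) ^ (α - 1) * (s - r) ^ (-α) * M := by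
                  apply mul_le_mul_of_nonneg_left this
                  exact mul_nonneg (Real.rpow_nonneg (by linarith [hs.2]) _)
                    (Real.rpow_nonneg (by linarith [hr.2]) _)
              _ = M * (t - s) ^ (α - 1) * (s - r) ^ (-α) := by ring
          · rw [Set.indicator_of_notMem hr, Set.indicator_of_notMem hr, norm_zero]
        have hdint : Integrable
            (Set.indicator (Set.Ioo 0 s) (fun r => (M * (t - s) ^ (α - 1)) * (s - r) ^ (-α))) ν := by
          rw [integrable_indicator_iff measurableSet_Ioo]
          show IntegrableOn _ _ ν
          rw [IntegrableOn, hrestr s hs.2.le]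
          exact (rpow_integrableOn hs.1.le hα1).const_mul _
        calc (∫ r, ‖f s r‖ ∂ν)
            ≤ ∫ r, Set.indicator (Set.Ioo 0 s)
                (fun r => (M * (t - s) ^ (α - 1)) * (s - r) ^ (-α)) r ∂ν :=
              integral_mono_of_nonneg (Filter.Eventually.of_forall (fun r => norm_nonneg _))
                hdint (Filter.Eventually.of_forall hb1)
          _ = (M * (t - s) ^ (α - 1)) * ∫ r in Set.Ioo (0:ℝ) s, (s - r) ^ (-α) := by
              rw [MeasureTheory.integral_indicator measurableSet_Ioo, hrestr s hs.2.le, MeasureTheory.integral_const_mul]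
          _ = (M * (t - s) ^ (α - 1)) * (s ^ (1 - α) / (1 - α)) := by rw [hval s hs.1.le]
          _ ≤ M * (t ^ (1 - α) / (1 - α)) * (t - s) ^ (α - 1) := by
              have h1 : s ^ (1 - α) ≤ t ^ (1 - α) :=
                Real.rpow_le_rpow hs.1.le hs.2.le (by linarith)
              have h2 : (0:ℝ) ≤ (t - s) ^ (α - 1) := Real.rpow_nonneg (by linarith [hs.2]) _
              have h3 : (0:ℝ) < 1 - α := by linarith
              have h4 : s ^ (1 - α) / (1 - α) ≤ t ^ (1 - α) / (1 - α) :=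
                (div_le_div_iff_of_pos_right h3).mpr h1
              calc (M * (t - s) ^ (α - 1)) * (s ^ (1 - α) / (1 - α))
                  = (M * (s ^ (1 - α) / (1 - α))) * (t - s) ^ (α - 1) := by ring
                _ ≤ (M * (t ^ (1 - α) / (1 - α))) * (t - s) ^ (α - 1) :=
                    mul_le_mul_of_nonneg_right (mul_le_mul_of_nonneg_left h4 hM0) h2
  -- conversions of the interval integrals to set integrals over `Ioo 0 t`
  have hLHS : (∫ s in (0 : ℝ)..t, S (t - s) (h s)) = ∫ r, G r ∂ν := by
    rw [intervalIntegral.integral_of_le ht, integral_Ioc_eq_integral_Ioo, hνdef]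
  have hRHS : (∫ s in (0 : ℝ)..t, ((t - s) ^ (α - 1)) • S (t - s) (Y s))
      = ∫ s, (∫ r, f s r ∂ν) ∂ν := by
    rw [intervalIntegral.integral_of_le ht, integral_Ioc_eq_integral_Ioo]
    exact setIntegral_congr_fun measurableSet_Ioo (fun s hs => hAB s hs)
  -- Fubini
  have hswap : (∫ s, (∫ r, f s r ∂ν) ∂ν) = ∫ r, (∫ s, f s r ∂ν) ∂ν :=
    integral_integral_swap hInt
  -- evaluate the inner integral after swapping
  have hinner : ∀ r ∈ Set.Ioo (0:ℝ) t,
      (∫ s, f s r ∂ν) = (Real.pi / Real.sin (Real.pi * α)) • G r := by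
    intro r hr
    have hrw : (fun s => f s r) = Set.indicator (Set.Ioi r) (fun s => κ s r • G r) := by
      funext s
      rw [hfdef]
      by_cases hc : r < s
      · have h1 : r ∈ Set.Ioo 0 s := ⟨hr.1, hc⟩
        have h2 : s ∈ Set.Ioi r := hc
        simp only [Set.indicator_of_mem h1, Set.indicator_of_mem h2]
      · have h1 : r ∉ Set.Ioo 0 s := fun hmem' => hc hmem'.2
        have h2 : s ∉ Set.Ioi r := hc
        simp only [Set.indicator_of_notMem h1, Set.indicator_of_notMem h2]
    rw [hrw, MeasureTheory.integral_indicator measurableSet_Ioi, hνdef,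
      Measure.restrict_restrict measurableSet_Ioi,
      show Set.Ioi r ∩ Set.Ioo 0 t = Set.Ioo r t from by
        ext x
        simp only [Set.mem_inter_iff, Set.mem_Ioi, Set.mem_Ioo]
        constructor
        · rintro ⟨h1, _, h3⟩; exact ⟨h1, h3⟩
        · rintro ⟨h1, h2⟩; exact ⟨h1, hr.1.trans h1, h2⟩]
    rw [_root_.integral_smul_const, ← integral_Ioc_eq_integral_Ioo,
      ← intervalIntegral.integral_of_le hr.2.le]
    congr 1
    exact beta_sub hα0 hα1 hr.2
  -- put everything together
  have hsin : 0 < Real.sin (Real.pi * α) := by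
    apply Real.sin_pos_of_pos_of_lt_pi
    · exact mul_pos Real.pi_pos hα0
    · nlinarith [Real.pi_pos]
  have hfinal : (∫ s in (0 : ℝ)..t, ((t - s) ^ (α - 1)) • S (t - s) (Y s))
      = (Real.pi / Real.sin (Real.pi * α)) • ∫ s in (0 : ℝ)..t, S (t - s) (h s) := by
    rw [hRHS, hswap, hLHS]
    rw [setIntegral_congr_fun measurableSet_Ioo hinner]
    exact integral_smul _ _
  rw [hfinal, smul_smul, div_mul_div_comm,
    mul_comm (Real.sin (Real.pi * α)) Real.pi,
    div_self (by positivity : Real.pi * Real.sin (Real.pi * α) ≠ 0), one_smul]
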